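/- Let π ∈ (0,1) and g := π/(1−π). Let P be a real 2×2 matrix with nonnegative entries, columns summing to 1, and fixed point (π, 1−π)ᵀ, i.e., P_{0|0}π + P_{0|1}(1−π) = π. Given p ∈ [0,1], set p' := P_{0|0}·p + P_{0|1}(1−p), q := (1−p)·g, and q' := (1−p')·g. Then (p'−q)(p−q') = P_{0|0}·P_{1|1}·(p−q)². Consequently, if p ≠ π, then √(P_{0|0}P_{1|1}) = √((p'−q)(p−q'))/|p−q|, so the covariant qubit coherence bound |σ₀₁| ≤ √(P_{0|0}P_{1|1})|ρ₀₁| takes the generalised-thermal-operations form |σ₀₁| ≤ [√((p'−q)(p−q'))/|p−q|]·|ρ₀₁|. -/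

import Mathlib

open Matrix

/-- **Qubit generalised-thermal-operations form of the coherence bound.** For a qubit
column-stochastic population transfer matrix `P` with thermal fixed point `(π, 1−π)`
(Gibbs ratio `g = π/(1−π)`), the identity `(p'−q)(p−q') = P_{0|0}P_{1|1}(p−q)²` holds,
where `p' = P_{0|0}p + P_{0|1}(1−p)`, `q = (1−p)g` and `q' = (1−p')g`. Consequently, for
`p ≠ π`, `√(P_{0|0}P_{1|1}) = √((p'−q)(p−q'))/|p−q|` and the covariant qubit coherence
bound `|σ₀₁| ≤ √(P_{0|0}P_{1|1})|ρ₀₁|` takes the generalised-thermal-operations form. -/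
theorem qubit_gto_coherence_bound_form
    (π : ℝ) (hπ : π ∈ Set.Ioo (0 : ℝ) 1)
    (g : ℝ) (hg : g = π / (1 - π))
    (P : Matrix (Fin 2) (Fin 2) ℝ)
    (hPnn : ∀ i j, 0 ≤ P i j)
    (hPcol : ∀ j, ∑ i, P i j = 1)
    (hfix : P 0 0 * π + P 0 1 * (1 - π) = π)
    (p : ℝ) (hp : p ∈ Set.Icc (0 : ℝ) 1)
    (p' q q' : ℝ)
    (hp' : p' = P 0 0 * p + P 0 1 * (1 - p))
    (hq : q = (1 - p) * g)
    (hq' : q' = (1 - p') * g) :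
    (p' - q) * (p - q') = P 0 0 * P 1 1 * (p - q) ^ 2 ∧
    (p ≠ π →
      Real.sqrt (P 0 0 * P 1 1) = Real.sqrt ((p' - q) * (p - q')) / |p - q| ∧
      ∀ ρ01 σ01 : ℂ,
        ‖σ01‖ ≤ Real.sqrt (P 0 0 * P 1 1) * ‖ρ01‖ →
        ‖σ01‖ ≤ (Real.sqrt ((p' - q) * (p - q')) / |p - q|) * ‖ρ01‖) := by
  obtain ⟨h0, h1⟩ := hπ
  have h1π : (1 : ℝ) - π ≠ 0 := by linarith
  have hcol1 : P 0 1 + P 1 1 = 1 := by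
    have := hPcol 1; simpa [Fin.sum_univ_two] using this
  have hP01 : P 0 1 = (1 - P 0 0) * g := by
    rw [hg]; field_simp; linarith [hfix]
  have hP11 : P 1 1 = 1 - P 0 1 := by linarith
  have key1 : p' - q = P 0 0 * (p - q) := by
    rw [hp', hq, hP01]; ring
  have key2 : p - q' = P 1 1 * (p - q) := by
    rw [hq', hp', hq, hP11, hP01]; ring
  have hid : (p' - q) * (p - q') = P 0 0 * P 1 1 * (p - q) ^ 2 := by
    rw [key1, key2]; ring
  refine ⟨hid, fun hne => ?_⟩
  have hpq : p - q ≠ 0 := by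
    rw [hq, hg]
    intro h
    apply hne
    have : p * (1 - π) - (1 - p) * π = 0 := by
      field_simp at h; linarith
    nlinarith
  have hnn : 0 ≤ P 0 0 * P 1 1 := mul_nonneg (hPnn 0 0) (hPnn 1 1)
  have hsq : Real.sqrt ((p' - q) * (p - q')) = Real.sqrt (P 0 0 * P 1 1) * |p - q| := by
    rw [hid, Real.sqrt_mul hnn, Real.sqrt_sq_eq_abs]
  have heq : Real.sqrt (P 0 0 * P 1 1) = Real.sqrt ((p' - q) * (p - q')) / |p - q| := by
    rw [hsq, mul_div_assoc, div_self (abs_ne_zero.mpr hpq), mul_one]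
  exact ⟨heq, fun ρ σ h => by rwa [heq] at h⟩
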